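/- (Weak duality, part (ii): equality characterization.) In the setting of weak duality — (ρ, m) ∈ C_F(ρ^a, ρ^b) and S : [0,1] → ℝ^N absolutely continuous with square-integrable derivative satisfying, for a.e. t, ∑_i Ṡ_i(t) ρ_i(t) + (1/4) ∑_{(i,j)∈E} (S_i(t) − S_j(t))² θ_ij(ρ(t)) + (1/2) ∑_{(i,j)∈E} (Σ_i − Σ_j)(S_i(t) − S_j(t)) θ_ij(ρ(t)) ẇ(t) ≤ 0 — equality ⟨S(1), ρ^b⟩ − ⟨S(0), ρ^a⟩ = A(ρ, m) holds if and only if for a.e. t ∈ [0,1]: m_ij(t) = θ_ij(ρ(t)) (S_j(t) − S_i(t)) for every (i,j) ∈ E, and ∑_i Ṡ_i(t) ρ_i(t) + (1/4) ∑_{(i,j)∈E} (S_i(t) − S_j(t))² θ_ij(ρ(t)) + (1/2) ∑_{(i,j)∈E} (Σ_i − Σ_j)(S_i(t) − S_j(t)) θ_ij(ρ(t)) ẇ(t) = 0. -/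

import Mathlib

open scoped BigOperators ENNReal
open MeasureTheory

noncomputable section

/-- Density-dependent edge weight `θ_ij(ρ) = (ρ_i + ρ_j)/2`. -/
def thetaA {N : ℕ} (ρ : Fin N → ℝ) (i j : Fin N) : ℝ := (ρ i + ρ j) / 2

/-- The cost function `L : ℝ × ℝ → [0,∞]`, `L(x,y) = y²/x` for `x > 0`,
`L(0,0) = 0`, and `L(x,y) = ∞` otherwise. -/
def Lcost (x y : ℝ) : ℝ≥0∞ :=
  if 0 < x then ENNReal.ofReal (y ^ 2 / x)
  else if x = 0 ∧ y = 0 then 0 else ⊤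

/-- Membership in the probability simplex `P(G)`. -/
def ProbVec {N : ℕ} (ρ : Fin N → ℝ) : Prop := (∀ i, 0 ≤ ρ i) ∧ ∑ i, ρ i = 1

/-- A vector field on the graph: a skew-symmetric matrix supported on edges. -/
def VecField {N : ℕ} (E : Fin N → Fin N → Prop) (m : Fin N → Fin N → ℝ) : Prop :=
  (∀ i j, m i j = - m j i) ∧ (∀ i j, ¬ E i j → m i j = 0)

/-- `w` is continuous and piecewise linear on `[0,1]` with a.e. derivative `wd`:
there is a partition `0 = t₀ < t₁ < ⋯ = 1` on whose pieces `w` is affine with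
slope `c k`, and `wd` equals `c k` on `[t_k, t_{k+1})`. -/
def IsPWL (w wd : ℝ → ℝ) : Prop :=
  ∃ (K : ℕ) (t : Fin (K + 2) → ℝ) (c : Fin (K + 1) → ℝ),
    StrictMono t ∧ t 0 = 0 ∧ t (Fin.last (K + 1)) = 1 ∧
    (∀ k : Fin (K + 1), ∀ s ∈ Set.Icc (t k.castSucc) (t k.succ),
      w s = w (t k.castSucc) + c k * (s - t k.castSucc)) ∧
    (∀ k : Fin (K + 1), ∀ s ∈ Set.Ico (t k.castSucc) (t k.succ), wd s = c k)

/-- The action `A(ρ,m) = ∫₀¹ (1/4) ∑_{(i,j)∈E} L(θ_ij(ρ(t)), m_ij(t)) dt`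
(sum over ordered pairs), valued in `[0,∞]`. -/
def action {N : ℕ} (E : Fin N → Fin N → Prop) [DecidableRel E]
    (ρ : ℝ → Fin N → ℝ) (m : ℝ → Fin N → Fin N → ℝ) : ℝ≥0∞ :=
  ∫⁻ t in Set.Icc (0 : ℝ) 1,
    (1 / 4) * ∑ i, ∑ j, (if E i j then Lcost (thetaA (ρ t) i j) (m t i j) else 0)

/-- The feasible set `C_F(ρ^a,ρ^b)` of the Wong–Zakai perturbed optimal control
problem: `ρ` is an absolutely continuous curve in `P(G)` joining `ρ^a` to `ρ^b`,
`m` is an `L²` field of skew-symmetric matrices supported on edges, and for a.e. `t`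
and all `i`: `ρ̇_i + ∑_{j∈N(i)} m_ij + ∑_{j∈N(i)} (Σ_j − Σ_i) θ_ij(ρ) ẇ = 0`
(stated in integrated form). -/
def Feasible {N : ℕ} (E : Fin N → Fin N → Prop) [DecidableRel E]
    (Sg : Fin N → ℝ) (wd : ℝ → ℝ) (ρa ρb : Fin N → ℝ)
    (ρ : ℝ → Fin N → ℝ) (m : ℝ → Fin N → Fin N → ℝ) : Prop :=
  ContinuousOn ρ (Set.Icc 0 1) ∧
  (∀ t ∈ Set.Icc (0 : ℝ) 1, ProbVec (ρ t)) ∧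
  ρ 0 = ρa ∧ ρ 1 = ρb ∧
  (∀ t, VecField E (m t)) ∧
  (∀ i j, MemLp (fun t => m t i j) 2 (volume.restrict (Set.Icc (0 : ℝ) 1))) ∧
  (∀ i, IntervalIntegrable
    (fun s => ∑ j, (if E i j then m s i j + (Sg j - Sg i) * thetaA (ρ s) i j * wd s else 0))
    volume 0 1) ∧
  (∀ i, ∀ t ∈ Set.Icc (0 : ℝ) 1,
    ρ t i = ρa i - ∫ s in (0 : ℝ)..t,
      ∑ j, (if E i j then m s i j + (Sg j - Sg i) * thetaA (ρ s) i j * wd s else 0))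

/-- `S : [0,1] → ℝ^N` is absolutely continuous with square-integrable derivative
`Sd` (stated in integrated form). -/
def AbsCtsL2 {N : ℕ} (S Sd : ℝ → Fin N → ℝ) : Prop :=
  (∀ i, MemLp (fun t => Sd t i) 2 (volume.restrict (Set.Icc (0 : ℝ) 1))) ∧
  (∀ i, IntervalIntegrable (fun t => Sd t i) volume 0 1) ∧
  (∀ i, ∀ t ∈ Set.Icc (0 : ℝ) 1, S t i = S 0 i + ∫ s in (0 : ℝ)..t, Sd s i)

/-- The Hamilton–Jacobi expression
`∑_i Ṡ_i μ_i + (1/4) ∑_{(i,j)∈E} (S_i − S_j)² θ_ij(μ)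
  + (1/2) ∑_{(i,j)∈E} (Σ_i − Σ_j)(S_i − S_j) θ_ij(μ) ẇ(t)`. -/
def hjbExpr {N : ℕ} (E : Fin N → Fin N → Prop) [DecidableRel E]
    (Sg : Fin N → ℝ) (wd : ℝ → ℝ) (S Sd : ℝ → Fin N → ℝ)
    (μ : Fin N → ℝ) (t : ℝ) : ℝ :=
  (∑ i, Sd t i * μ i)
    + (1 / 4) * ∑ i, ∑ j, (if E i j then (S t i - S t j) ^ 2 * thetaA μ i j else 0)
    + (1 / 2) *
        (∑ i, ∑ j, (if E i j then (Sg i - Sg j) * (S t i - S t j) * thetaA μ i j else 0))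
        * wd t


section AuxIBP
open Set

lemma ibp_core (p q : ℝ → ℝ) (hp : IntervalIntegrable p volume 0 1)
    (hq : IntervalIntegrable q volume 0 1) :
    (∫ t in Ioc (0:ℝ) 1, p t * (∫ s in (0:ℝ)..t, q s))
      + (∫ t in Ioc (0:ℝ) 1, (∫ s in (0:ℝ)..t, p s) * q t)
      = (∫ s in Ioc (0:ℝ) 1, p s) * (∫ s in Ioc (0:ℝ) 1, q s) := by
  set μ := volume.restrict (Ioc (0:ℝ) 1) with hμ
  have hpI : Integrable p μ := hp.1
  have hqI : Integrable q μ := hq.1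
  have key : ∀ r : ℝ → ℝ, ∀ t ∈ Ioc (0:ℝ) 1,
      (∫ s in (0:ℝ)..t, r s) = ∫ s, (if s ≤ t then r s else 0) ∂μ := by
    intro r t ht
    rw [hμ, intervalIntegral.integral_of_le ht.1.le]
    have : ∀ s : ℝ, (if s ≤ t then r s else 0) = (Iic t).indicator r s := by
      intro s; simp [Set.indicator_apply]
    simp_rw [this]
    rw [setIntegral_indicator measurableSet_Iic, Set.Ioc_inter_Iic, min_eq_right ht.2]
  have hF : Integrable (fun z : ℝ × ℝ => if z.2 ≤ z.1 then p z.1 * q z.2 else 0) (μ.prod μ) := by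
    have h0 := (hpI.mul_prod hqI).indicator
      (μ := μ.prod μ) (s := {z : ℝ × ℝ | z.2 ≤ z.1})
      (measurableSet_le measurable_snd measurable_fst)
    have : ({z : ℝ × ℝ | z.2 ≤ z.1}.indicator fun z : ℝ × ℝ => p z.1 * q z.2)
        = fun z : ℝ × ℝ => if z.2 ≤ z.1 then p z.1 * q z.2 else 0 := by
      funext z; simp [Set.indicator_apply]
    rwa [this] at h0
  have hG : Integrable (fun z : ℝ × ℝ => if z.1 ≤ z.2 then p z.1 * q z.2 else 0) (μ.prod μ) := by
    have h0 := (hpI.mul_prod hqI).indicator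
      (μ := μ.prod μ) (s := {z : ℝ × ℝ | z.1 ≤ z.2})
      (measurableSet_le measurable_fst measurable_snd)
    have : ({z : ℝ × ℝ | z.1 ≤ z.2}.indicator fun z : ℝ × ℝ => p z.1 * q z.2)
        = fun z : ℝ × ℝ => if z.1 ≤ z.2 then p z.1 * q z.2 else 0 := by
      funext z; simp [Set.indicator_apply]
    rwa [this] at h0
  have hA1 : (∫ t in Ioc (0:ℝ) 1, p t * (∫ s in (0:ℝ)..t, q s))
      = ∫ z, (if z.2 ≤ z.1 then p z.1 * q z.2 else 0) ∂(μ.prod μ) := by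
    have e1 : (∫ t in Ioc (0:ℝ) 1, p t * (∫ s in (0:ℝ)..t, q s))
        = ∫ t, (∫ s, (if s ≤ t then p t * q s else 0) ∂μ) ∂μ := by
      rw [hμ]
      apply setIntegral_congr_fun measurableSet_Ioc
      intro t ht
      dsimp only
      rw [key q t ht, ← integral_const_mul]
      congr 1; funext s
      by_cases h : s ≤ t <;> simp [h]
    rw [e1]
    exact integral_integral (f := fun t s => if s ≤ t then p t * q s else 0) hF
  have hA2 : (∫ t in Ioc (0:ℝ) 1, (∫ s in (0:ℝ)..t, p s) * q t)
      = ∫ z, (if z.1 ≤ z.2 then p z.1 * q z.2 else 0) ∂(μ.prod μ) := by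
    have e1 : (∫ t in Ioc (0:ℝ) 1, (∫ s in (0:ℝ)..t, p s) * q t)
        = ∫ t, (∫ s, (if s ≤ t then p s * q t else 0) ∂μ) ∂μ := by
      rw [hμ]
      apply setIntegral_congr_fun measurableSet_Ioc
      intro t ht
      dsimp only
      rw [key p t ht, ← integral_mul_const]
      congr 1; funext s
      by_cases h : s ≤ t <;> simp [h]
    rw [e1, integral_integral (f := fun t s => if s ≤ t then p s * q t else 0) hG.swap,
      ← MeasureTheory.integral_prod_swap
        (f := fun z : ℝ × ℝ => if z.1 ≤ z.2 then p z.1 * q z.2 else 0)]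
    rfl
  have hdiag : (μ.prod μ) {z : ℝ × ℝ | z.1 = z.2} = 0 := by
    rw [MeasureTheory.Measure.prod_apply (measurableSet_eq_fun measurable_fst measurable_snd)]
    have : ∀ x : ℝ, μ (Prod.mk x ⁻¹' {z : ℝ × ℝ | z.1 = z.2}) = 0 := by
      intro x
      have : (Prod.mk x ⁻¹' {z : ℝ × ℝ | z.1 = z.2}) = {x} := by
        ext y; simp [eq_comm]
      rw [this, hμ]
      exact le_antisymm ((Measure.restrict_le_self _).trans_eq (Real.volume_singleton)) zero_le
    rw [lintegral_congr this, lintegral_zero]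
  rw [hA1, hA2, ← integral_add hF hG]
  have hae : (fun z : ℝ × ℝ => (if z.2 ≤ z.1 then p z.1 * q z.2 else 0)
      + (if z.1 ≤ z.2 then p z.1 * q z.2 else 0))
      =ᵐ[μ.prod μ] fun z : ℝ × ℝ => p z.1 * q z.2 := by
    have : ∀ᵐ z ∂(μ.prod μ), z ∉ {z : ℝ × ℝ | z.1 = z.2} := by
      rw [ae_iff]
      convert hdiag using 2
      ext z; simp
    filter_upwards [this] with z hz
    replace hz : z.1 ≠ z.2 := hz
    rcases lt_trichotomy z.1 z.2 with h | h | h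
    · simp [h.le, not_le.mpr h]
    · exact absurd h hz
    · simp [h.le, not_le.mpr h]
  rw [integral_congr_ae hae, integral_prod_mul]

lemma ibp (p q : ℝ → ℝ) (hp : IntervalIntegrable p volume 0 1)
    (hq : IntervalIntegrable q volume 0 1) (u0 v0 : ℝ) :
    (u0 + ∫ s in (0:ℝ)..1, p s) * (v0 + ∫ s in (0:ℝ)..1, q s) - u0 * v0
    = ∫ t in Icc (0:ℝ) 1,
        (p t * (v0 + ∫ s in (0:ℝ)..t, q s) + (u0 + ∫ s in (0:ℝ)..t, p s) * q t) := by
  have prim : ∀ r : ℝ → ℝ, IntervalIntegrable r volume 0 1 →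
      ContinuousOn (fun t => ∫ s in (0:ℝ)..t, r s) (Icc (0:ℝ) 1) := by
    intro r hr
    have := intervalIntegral.continuousOn_primitive_interval' hr
      (Set.left_mem_uIcc (a := (0:ℝ)) (b := 1))
    rwa [Set.uIcc_of_le zero_le_one] at this
  obtain ⟨Cq, hCq⟩ := isCompact_Icc.exists_bound_of_continuousOn (prim q hq)
  obtain ⟨Cp, hCp⟩ := isCompact_Icc.exists_bound_of_continuousOn (prim p hp)
  have hmeas : ∀ r : ℝ → ℝ, IntervalIntegrable r volume 0 1 →
      AEStronglyMeasurable (fun t => ∫ s in (0:ℝ)..t, r s)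
        (volume.restrict (Ioc (0:ℝ) 1)) := fun r hr =>
    (((prim r hr).mono Ioc_subset_Icc_self).aestronglyMeasurable measurableSet_Ioc)
  have hbd : ∀ (r : ℝ → ℝ) (C : ℝ), (∀ x ∈ Icc (0:ℝ) 1, ‖∫ s in (0:ℝ)..x, r s‖ ≤ C) →
      ∀ᵐ t ∂(volume.restrict (Ioc (0:ℝ) 1)), ‖∫ s in (0:ℝ)..t, r s‖ ≤ C := by
    intro r C hC
    filter_upwards [ae_restrict_mem measurableSet_Ioc] with t ht
    exact hC t (Ioc_subset_Icc_self ht)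
  have i1 : Integrable (fun t => p t * v0) (volume.restrict (Ioc (0:ℝ) 1)) :=
    hp.1.mul_const v0
  have i2 : Integrable (fun t => p t * ∫ s in (0:ℝ)..t, q s)
      (volume.restrict (Ioc (0:ℝ) 1)) := by
    have := Integrable.bdd_mul (c := Cq) hp.1 (hmeas q hq) (hbd q Cq hCq)
    simpa [mul_comm] using this
  have i3 : Integrable (fun t => u0 * q t) (volume.restrict (Ioc (0:ℝ) 1)) :=
    hq.1.const_mul u0
  have i4 : Integrable (fun t => (∫ s in (0:ℝ)..t, p s) * q t)
      (volume.restrict (Ioc (0:ℝ) 1)) :=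
    Integrable.bdd_mul (c := Cp) hq.1 (hmeas p hp) (hbd p Cp hCp)
  have hcore := ibp_core p q hp hq
  rw [integral_Icc_eq_integral_Ioc]
  have e1 : (∫ t in Ioc (0:ℝ) 1,
        (p t * (v0 + ∫ s in (0:ℝ)..t, q s) + (u0 + ∫ s in (0:ℝ)..t, p s) * q t))
      = ∫ t in Ioc (0:ℝ) 1,
        ((p t * v0 + p t * ∫ s in (0:ℝ)..t, q s)
          + (u0 * q t + (∫ s in (0:ℝ)..t, p s) * q t)) := by
    congr 1; funext t; ring
  have i12 : Integrable (fun t => p t * v0 + p t * ∫ s in (0:ℝ)..t, q s)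
      (volume.restrict (Ioc (0:ℝ) 1)) := i1.add i2
  have i34 : Integrable (fun t => u0 * q t + (∫ s in (0:ℝ)..t, p s) * q t)
      (volume.restrict (Ioc (0:ℝ) 1)) := i3.add i4
  rw [e1, integral_add i12 i34, integral_add i1 i2, integral_add i3 i4,
    integral_mul_const, integral_const_mul,
    intervalIntegral.integral_of_le (zero_le_one (α := ℝ)),
    intervalIntegral.integral_of_le (zero_le_one (α := ℝ))]
  linear_combination -hcore

end AuxIBP

lemma sum_swap_skew {N : ℕ} (E : Fin N → Fin N → Prop) [DecidableRel E]
    (hE : ∀ i j, E i j ↔ E j i) (S : Fin N → ℝ) (M : Fin N → Fin N → ℝ)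
    (hM : ∀ i j, E i j → M i j = - M j i) :
    ∑ i, ∑ j, (if E i j then S i * M i j else 0)
      = (1/2) * ∑ i, ∑ j, (if E i j then (S i - S j) * M i j else 0) := by
  have h1 : ∑ i, ∑ j, (if E i j then S i * M i j else 0)
      = ∑ i, ∑ j, (if E i j then - (S j * M i j) else 0) := by
    rw [Finset.sum_comm]
    apply Finset.sum_congr rfl; intro i _
    apply Finset.sum_congr rfl; intro j _
    by_cases h : E j i
    · rw [if_pos h, if_pos ((hE j i).mp h), hM j i h]; ring
    · rw [if_neg h, if_neg (fun h' => h ((hE i j).mp h'))]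
  have h2 : ∑ i, ∑ j, (if E i j then S i * M i j else 0)
        + ∑ i, ∑ j, (if E i j then S i * M i j else 0)
      = ∑ i, ∑ j, (if E i j then (S i - S j) * M i j else 0) := by
    nth_rewrite 2 [h1]
    rw [← Finset.sum_add_distrib]
    apply Finset.sum_congr rfl; intro i _
    rw [← Finset.sum_add_distrib]
    apply Finset.sum_congr rfl; intro j _
    by_cases h : E i j
    · simp only [if_pos h]; ring
    · simp [h]
  linarith

lemma gap_identity {N : ℕ} (E : Fin N → Fin N → Prop) [DecidableRel E]
    (hE : ∀ i j, E i j ↔ E j i)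
    (Sg : Fin N → ℝ) (wd : ℝ → ℝ) (S Sd : ℝ → Fin N → ℝ) (t : ℝ)
    (ρv : Fin N → ℝ) (mv : Fin N → Fin N → ℝ)
    (hskew : ∀ i j, mv i j = - mv j i)
    (hgood : ∀ i j, E i j → thetaA ρv i j = 0 → mv i j = 0) :
    (1/4) * (∑ i, ∑ j, if E i j then (mv i j)^2 / thetaA ρv i j else 0)
      - (∑ i, (Sd t i * ρv i - S t i *
          (∑ j, if E i j then mv i j + (Sg j - Sg i) * thetaA ρv i j * wd t else 0)))
    = -(hjbExpr E Sg wd S Sd ρv t)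
      + (1/4) * ∑ i, ∑ j, (if E i j then
          (mv i j + thetaA ρv i j * (S t i - S t j))^2 / thetaA ρv i j else 0) := by
  have hsplit : ∑ i, (Sd t i * ρv i - S t i *
          (∑ j, if E i j then mv i j + (Sg j - Sg i) * thetaA ρv i j * wd t else 0))
      = (∑ i, Sd t i * ρv i)
        - ((∑ i, ∑ j, (if E i j then S t i * mv i j else 0))
          + ∑ i, ∑ j, (if E i j then S t i * ((Sg j - Sg i) * thetaA ρv i j * wd t) else 0)) := by
    rw [Finset.sum_sub_distrib, ← Finset.sum_add_distrib]
    congr 1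
    apply Finset.sum_congr rfl; intro i _
    rw [Finset.mul_sum, ← Finset.sum_add_distrib]
    apply Finset.sum_congr rfl; intro j _
    by_cases h : E i j
    · simp only [if_pos h]; ring
    · simp [h]
  have e1 := sum_swap_skew E hE (fun i => S t i) mv (fun i j _ => hskew i j)
  have e2 := sum_swap_skew E hE (fun i => S t i)
      (fun i j => (Sg j - Sg i) * thetaA ρv i j * wd t)
      (by intro i j _; simp only [thetaA]; ring)
  have e4 : ∑ i, ∑ j, (if E i j then (S t i - S t j) *
        ((Sg j - Sg i) * thetaA ρv i j * wd t) else 0)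
      = -((∑ i, ∑ j, (if E i j then (Sg i - Sg j) * (S t i - S t j) * thetaA ρv i j else 0))
          * wd t) := by
    rw [Finset.sum_mul, ← Finset.sum_neg_distrib]
    apply Finset.sum_congr rfl; intro i _
    rw [Finset.sum_mul, ← Finset.sum_neg_distrib]
    apply Finset.sum_congr rfl; intro j _
    by_cases h : E i j
    · simp only [if_pos h]; ring
    · simp [h]
  have e3 : ∑ i, ∑ j, (if E i j then
        (mv i j + thetaA ρv i j * (S t i - S t j))^2 / thetaA ρv i j else 0)
      = (∑ i, ∑ j, (if E i j then (mv i j)^2 / thetaA ρv i j else 0))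
        + 2 * (∑ i, ∑ j, (if E i j then (S t i - S t j) * mv i j else 0))
        + ∑ i, ∑ j, (if E i j then (S t i - S t j)^2 * thetaA ρv i j else 0) := by
    rw [Finset.mul_sum, ← Finset.sum_add_distrib, ← Finset.sum_add_distrib]
    apply Finset.sum_congr rfl; intro i _
    rw [Finset.mul_sum, ← Finset.sum_add_distrib, ← Finset.sum_add_distrib]
    apply Finset.sum_congr rfl; intro j _
    by_cases h : E i j
    · simp only [if_pos h]
      rcases eq_or_ne (thetaA ρv i j) 0 with hz | hz
      · rw [hz, hgood i j h hz]; simp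
      · field_simp; ring
    · simp [h]
  rw [hsplit, hjbExpr]
  linear_combination e1 + e2 + (1/2) * e4 - (1/4) * e3


/-- Weak duality, part (ii): in the setting of weak duality, equality
`⟨S(1),ρ^b⟩ − ⟨S(0),ρ^a⟩ = A(ρ,m)` holds if and only if for a.e. `t`,
`m_ij = θ_ij(ρ)(S_j − S_i)` on every edge and the Hamilton–Jacobi expression
vanishes along `ρ`. -/
theorem weak_duality_ii
    (N : ℕ) (hN : 2 ≤ N) (E : Fin N → Fin N → Prop) [DecidableRel E]
    (hEsymm : ∀ i j, E i j ↔ E j i) (hEirr : ∀ i, ¬ E i i)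
    (hconn : ∀ i j : Fin N, Relation.ReflTransGen (fun a b => E a b) i j)
    (Sg : Fin N → ℝ) (w wd : ℝ → ℝ) (hw : IsPWL w wd)
    (ρa ρb : Fin N → ℝ) (hρa : ProbVec ρa) (hρb : ProbVec ρb)
    (ρ : ℝ → Fin N → ℝ) (m : ℝ → Fin N → Fin N → ℝ)
    (hfeas : Feasible E Sg wd ρa ρb ρ m)
    (S Sd : ℝ → Fin N → ℝ) (hS : AbsCtsL2 S Sd)
    (hhjb : ∀ᵐ t ∂(volume.restrict (Set.Icc (0 : ℝ) 1)),
      hjbExpr E Sg wd S Sd (ρ t) t ≤ 0) :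
    (action E ρ m ≠ ⊤ ∧
        (action E ρ m).toReal = (∑ i, S 1 i * ρb i) - ∑ i, S 0 i * ρa i)
      ↔ (∀ᵐ t ∂(volume.restrict (Set.Icc (0 : ℝ) 1)),
          (∀ i j, E i j → m t i j = thetaA (ρ t) i j * (S t j - S t i)) ∧
          hjbExpr E Sg wd S Sd (ρ t) t = 0) := by
  classical
  obtain ⟨hρcont, hρP, hρ0, hρ1, hmV, hmL2, hfint, hceq⟩ := hfeas
  obtain ⟨hSdL2, hSdint, hSrep⟩ := hS
  haveI hfinμ : IsFiniteMeasure (volume.restrict (Set.Icc (0:ℝ) 1)) := by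
    constructor
    rw [Measure.restrict_apply_univ, Real.volume_Icc]
    exact ENNReal.ofReal_lt_top
  have hmem : ∀ᵐ t ∂(volume.restrict (Set.Icc (0:ℝ) 1)), t ∈ Set.Icc (0:ℝ) 1 :=
    ae_restrict_mem measurableSet_Icc
  have h01 : (1:ℝ) ∈ Set.Icc (0:ℝ) 1 := ⟨zero_le_one, le_rfl⟩
  have hρ0le : ∀ t ∈ Set.Icc (0:ℝ) 1, ∀ i, 0 ≤ ρ t i := fun t ht i => (hρP t ht).1 i
  have hρle1 : ∀ t ∈ Set.Icc (0:ℝ) 1, ∀ i, ρ t i ≤ 1 := by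
    intro t ht i
    have h1 := (hρP t ht).2
    have h2 := Finset.single_le_sum (f := fun j => ρ t j)
      (fun j _ => (hρP t ht).1 j) (Finset.mem_univ i)
    linarith
  have hθ0 : ∀ t ∈ Set.Icc (0:ℝ) 1, ∀ i j, 0 ≤ thetaA (ρ t) i j := by
    intro t ht i j
    have h1 := hρ0le t ht i; have h2 := hρ0le t ht j
    unfold thetaA; linarith
  have hρicont : ∀ i, ContinuousOn (fun t => ρ t i) (Set.Icc (0:ℝ) 1) :=
    fun i => (continuous_apply i).comp_continuousOn hρcont
  have hθcont : ∀ i j, ContinuousOn (fun t => thetaA (ρ t) i j) (Set.Icc (0:ℝ) 1) :=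
    fun i j => ((hρicont i).add (hρicont j)).div_const 2
  have hScont : ∀ i, ContinuousOn (fun t => S t i) (Set.Icc (0:ℝ) 1) := by
    intro i
    have hprim : ContinuousOn (fun t => S 0 i + ∫ s in (0:ℝ)..t, Sd s i)
        (Set.Icc (0:ℝ) 1) := by
      refine continuousOn_const.add ?_
      have := intervalIntegral.continuousOn_primitive_interval' (hSdint i)
        (Set.left_mem_uIcc (a := (0:ℝ)) (b := 1))
      rwa [Set.uIcc_of_le zero_le_one] at this
    exact hprim.congr (fun t ht => hSrep i t ht)
  choose C hC using fun i => isCompact_Icc.exists_bound_of_continuousOn (hScont i)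
  have hρmeas : ∀ i, AEStronglyMeasurable (fun t => ρ t i)
      (volume.restrict (Set.Icc (0:ℝ) 1)) :=
    fun i => (hρicont i).aestronglyMeasurable measurableSet_Icc
  have hθmeas : ∀ i j, AEStronglyMeasurable (fun t => thetaA (ρ t) i j)
      (volume.restrict (Set.Icc (0:ℝ) 1)) :=
    fun i j => (hθcont i j).aestronglyMeasurable measurableSet_Icc
  have hSmeas : ∀ i, AEStronglyMeasurable (fun t => S t i)
      (volume.restrict (Set.Icc (0:ℝ) 1)) :=
    fun i => (hScont i).aestronglyMeasurable measurableSet_Icc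
  have hmmeas : ∀ i j, AEStronglyMeasurable (fun t => m t i j)
      (volume.restrict (Set.Icc (0:ℝ) 1)) :=
    fun i j => (hmL2 i j).aestronglyMeasurable
  have hfint' : ∀ i, Integrable
      (fun s => ∑ j, (if E i j then m s i j + (Sg j - Sg i) * thetaA (ρ s) i j * wd s else 0))
      (volume.restrict (Set.Icc (0:ℝ) 1)) :=
    fun i => (integrableOn_Icc_iff_integrableOn_Ioc).mpr (hfint i).1
  have hSdint' : ∀ i, Integrable (fun t => Sd t i) (volume.restrict (Set.Icc (0:ℝ) 1)) :=
    fun i => (integrableOn_Icc_iff_integrableOn_Ioc).mpr (hSdint i).1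
  have hPi_int : ∀ i, Integrable (fun t => Sd t i * ρ t i
      - S t i * (∑ j, (if E i j then m t i j + (Sg j - Sg i) * thetaA (ρ t) i j * wd t else 0)))
      (volume.restrict (Set.Icc (0:ℝ) 1)) := by
    intro i
    refine Integrable.sub ?_ ?_
    · refine (Integrable.bdd_mul (c := 1) (hSdint' i) (hρmeas i) ?_).congr
        (Filter.Eventually.of_forall fun t => mul_comm _ _)
      filter_upwards [hmem] with t ht
      rw [Real.norm_eq_abs, abs_of_nonneg (hρ0le t ht i)]
      exact hρle1 t ht i
    · exact Integrable.bdd_mul (c := C i) (hfint' i) (hSmeas i)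
        (by filter_upwards [hmem] with t ht; exact hC i t ht)
  have hPint : Integrable (fun t => ∑ i, (Sd t i * ρ t i
      - S t i * (∑ j, (if E i j then m t i j + (Sg j - Sg i) * thetaA (ρ t) i j * wd t else 0))))
      (volume.restrict (Set.Icc (0:ℝ) 1)) :=
    integrable_finset_sum _ (fun i _ => hPi_int i)
  -- integration by parts
  have hIBP : ∀ i, (∫ t in Set.Icc (0:ℝ) 1, (Sd t i * ρ t i
      - S t i * (∑ j, (if E i j then m t i j + (Sg j - Sg i) * thetaA (ρ t) i j * wd t else 0))))
      = S 1 i * ρb i - S 0 i * ρa i := by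
    intro i
    have hq : IntervalIntegrable (fun s =>
        -(∑ j, (if E i j then m s i j + (Sg j - Sg i) * thetaA (ρ s) i j * wd s else 0)))
        volume 0 1 := (hfint i).neg
    have key := ibp (fun s => Sd s i)
      (fun s => -(∑ j, (if E i j then m s i j + (Sg j - Sg i) * thetaA (ρ s) i j * wd s else 0)))
      (hSdint i) hq (S 0 i) (ρa i)
    have hS1 : S 0 i + (∫ s in (0:ℝ)..1, Sd s i) = S 1 i := (hSrep i 1 h01).symm
    have hρb : ρa i + (∫ s in (0:ℝ)..1,
        -(∑ j, (if E i j then m s i j + (Sg j - Sg i) * thetaA (ρ s) i j * wd s else 0)))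
        = ρb i := by
      rw [intervalIntegral.integral_neg]
      have h2 := hceq i 1 h01
      rw [hρ1] at h2
      linarith
    rw [hS1, hρb] at key
    rw [key]
    apply setIntegral_congr_fun measurableSet_Icc
    intro t ht
    dsimp only
    rw [intervalIntegral.integral_neg]
    rw [hceq i t ht, hSrep i t ht]
    ring
  have hB : (∫ t in Set.Icc (0:ℝ) 1, (∑ i, (Sd t i * ρ t i
      - S t i * (∑ j, (if E i j then m t i j + (Sg j - Sg i) * thetaA (ρ t) i j * wd t else 0)))))
      = (∑ i, S 1 i * ρb i) - ∑ i, S 0 i * ρa i := by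
    rw [integral_finset_sum Finset.univ (fun i _ => hPi_int i), ← Finset.sum_sub_distrib]
    exact Finset.sum_congr rfl (fun i _ => hIBP i)
  -- nonnegativity of quotient terms
  have hterm_nonneg : ∀ t ∈ Set.Icc (0:ℝ) 1, ∀ (g : Fin N → Fin N → ℝ), ∀ i j,
      0 ≤ (if E i j then (g i j)^2 / thetaA (ρ t) i j else 0) := by
    intro t ht g i j
    by_cases h : E i j
    · rw [if_pos h]; exact div_nonneg (sq_nonneg _) (hθ0 t ht i j)
    · rw [if_neg h]
  have hgapid : ∀ t ∈ Set.Icc (0:ℝ) 1,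
      (∀ i j, E i j → thetaA (ρ t) i j = 0 → m t i j = 0) →
      (1/4) * (∑ i, ∑ j, if E i j then (m t i j)^2 / thetaA (ρ t) i j else 0)
        - (∑ i, (Sd t i * ρ t i - S t i *
            (∑ j, if E i j then m t i j + (Sg j - Sg i) * thetaA (ρ t) i j * wd t else 0)))
      = -(hjbExpr E Sg wd S Sd (ρ t) t)
        + (1/4) * ∑ i, ∑ j, (if E i j then
            (m t i j + thetaA (ρ t) i j * (S t i - S t j))^2 / thetaA (ρ t) i j else 0) :=
    fun t _ hg => gap_identity E hEsymm Sg wd S Sd t (ρ t) (m t) (fun i j => (hmV t).1 i j) hg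
  -- ENNReal bridge
  have h14 : (1/4 : ℝ≥0∞) = ENNReal.ofReal (1/4 : ℝ) := by
    rw [ENNReal.ofReal_div_of_pos (by norm_num : (0:ℝ) < 4)]
    norm_num
  have hLeq : ∀ t ∈ Set.Icc (0:ℝ) 1,
      (∀ i j, E i j → thetaA (ρ t) i j = 0 → m t i j = 0) →
      ((1:ℝ≥0∞)/4) * ∑ i, ∑ j, (if E i j then Lcost (thetaA (ρ t) i j) (m t i j) else 0)
        = ENNReal.ofReal ((1/4) * ∑ i, ∑ j,
            (if E i j then (m t i j)^2 / thetaA (ρ t) i j else 0)) := by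
    intro t ht hg
    have hterm : ∀ i j, (if E i j then Lcost (thetaA (ρ t) i j) (m t i j) else 0)
        = ENNReal.ofReal (if E i j then (m t i j)^2 / thetaA (ρ t) i j else 0) := by
      intro i j
      by_cases h : E i j
      · rw [if_pos h, if_pos h]
        rcases (hθ0 t ht i j).lt_or_eq with hpos | hzero
        · rw [Lcost, if_pos hpos]
        · have hm0 := hg i j h hzero.symm
          rw [Lcost, if_neg (by rw [← hzero]; exact lt_irrefl 0),
            if_pos ⟨hzero.symm, hm0⟩, hm0]
          norm_num
      · rw [if_neg h, if_neg h, ENNReal.ofReal_zero]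
    rw [ENNReal.ofReal_mul (by norm_num : (0:ℝ) ≤ 1/4), ← h14]
    congr 1
    rw [ENNReal.ofReal_sum_of_nonneg
      (fun i _ => Finset.sum_nonneg (fun j _ => hterm_nonneg t ht (fun i j => m t i j) i j))]
    refine Finset.sum_congr rfl (fun i _ => ?_)
    rw [ENNReal.ofReal_sum_of_nonneg (fun j _ => hterm_nonneg t ht (fun i j => m t i j) i j)]
    exact Finset.sum_congr rfl (fun j _ => hterm i j)
  -- measurability of G
  have hGmeas : AEStronglyMeasurable (fun t => (1/4) * ∑ i, ∑ j,
      (if E i j then (m t i j)^2 / thetaA (ρ t) i j else 0))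
      (volume.restrict (Set.Icc (0:ℝ) 1)) := by
    refine AEMeasurable.aestronglyMeasurable ?_
    refine AEMeasurable.const_mul ?_ _
    refine Finset.aemeasurable_fun_sum _ (fun i _ => ?_)
    refine Finset.aemeasurable_fun_sum _ (fun j _ => ?_)
    by_cases h : E i j
    · simp only [if_pos h]
      exact ((hmmeas i j).aemeasurable.pow_const 2).div (hθmeas i j).aemeasurable
    · simp only [if_neg h]; exact aemeasurable_const
  -- goodness from finite action
  have hgood_of_fin : action E ρ m ≠ ⊤ →
      ∀ᵐ t ∂(volume.restrict (Set.Icc (0:ℝ) 1)),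
        ∀ i j, E i j → thetaA (ρ t) i j = 0 → m t i j = 0 := by
    intro hne
    have hLm : Measurable (fun p : ℝ × ℝ => Lcost p.1 p.2) := by
      have hs2 : MeasurableSet {p : ℝ × ℝ | p.1 = 0 ∧ p.2 = 0} := by
        have : {p : ℝ × ℝ | p.1 = 0 ∧ p.2 = 0}
            = (Prod.fst ⁻¹' {(0:ℝ)}) ∩ (Prod.snd ⁻¹' {(0:ℝ)}) := by
          ext p; simp
        rw [this]
        exact (measurable_fst (measurableSet_singleton 0)).inter
          (measurable_snd (measurableSet_singleton 0))
      unfold Lcost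
      exact Measurable.ite (measurableSet_lt measurable_const measurable_fst)
        ((measurable_snd.pow_const 2).div measurable_fst).ennreal_ofReal
        (Measurable.ite hs2 measurable_const measurable_const)
    have haem : AEMeasurable (fun t => ((1:ℝ≥0∞)/4) * ∑ i, ∑ j,
        (if E i j then Lcost (thetaA (ρ t) i j) (m t i j) else 0))
        (volume.restrict (Set.Icc (0:ℝ) 1)) := by
      refine AEMeasurable.const_mul ?_ _
      refine Finset.aemeasurable_fun_sum _ (fun i _ => ?_)
      refine Finset.aemeasurable_fun_sum _ (fun j _ => ?_)
      by_cases h : E i j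
      · simp only [if_pos h]
        exact hLm.comp_aemeasurable
          (((hθmeas i j).aemeasurable).prodMk ((hmmeas i j).aemeasurable))
      · simp only [if_neg h]; exact aemeasurable_const
    have hae := ae_lt_top' haem hne
    filter_upwards [hae] with t hlt
    intro i j hij hz
    by_contra hne0
    have hL : Lcost (thetaA (ρ t) i j) (m t i j) = ⊤ := by
      rw [Lcost, if_neg (by rw [hz]; exact lt_irrefl 0), if_neg (fun hc => hne0 hc.2)]
    have hsum : (∑ i, ∑ j, (if E i j then Lcost (thetaA (ρ t) i j) (m t i j) else 0))
        = ⊤ := by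
      rw [ENNReal.sum_eq_top]
      exact ⟨i, Finset.mem_univ i, by
        rw [ENNReal.sum_eq_top]
        exact ⟨j, Finset.mem_univ j, by rw [if_pos hij, hL]⟩⟩
    rw [hsum, ENNReal.mul_top (by norm_num)] at hlt
    exact lt_irrefl _ hlt
  constructor
  · rintro ⟨hne, heq⟩
    have hgood := hgood_of_fin hne
    have hacteq : action E ρ m = ∫⁻ t in Set.Icc (0:ℝ) 1,
        ENNReal.ofReal ((1/4) * ∑ i, ∑ j,
          (if E i j then (m t i j)^2 / thetaA (ρ t) i j else 0)) := by
      unfold action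
      refine lintegral_congr_ae ?_
      filter_upwards [hmem, hgood] with t ht hg
      exact hLeq t ht hg
    have hGnn : ∀ᵐ t ∂(volume.restrict (Set.Icc (0:ℝ) 1)),
        0 ≤ (1/4) * ∑ i, ∑ j, (if E i j then (m t i j)^2 / thetaA (ρ t) i j else 0) := by
      filter_upwards [hmem] with t ht
      have h1 : 0 ≤ ∑ i, ∑ j, (if E i j then (m t i j)^2 / thetaA (ρ t) i j else 0) :=
        Finset.sum_nonneg (fun i _ => Finset.sum_nonneg
          (fun j _ => hterm_nonneg t ht (fun i j => m t i j) i j))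
      linarith
    have hGint : Integrable (fun t => (1/4) * ∑ i, ∑ j,
        (if E i j then (m t i j)^2 / thetaA (ρ t) i j else 0))
        (volume.restrict (Set.Icc (0:ℝ) 1)) := by
      refine ⟨hGmeas, ?_⟩
      rw [hasFiniteIntegral_iff_norm]
      have heqn : (∫⁻ t in Set.Icc (0:ℝ) 1, ENNReal.ofReal
          ‖(1/4) * ∑ i, ∑ j, (if E i j then (m t i j)^2 / thetaA (ρ t) i j else 0)‖)
          = ∫⁻ t in Set.Icc (0:ℝ) 1, ENNReal.ofReal
            ((1/4) * ∑ i, ∑ j, (if E i j then (m t i j)^2 / thetaA (ρ t) i j else 0)) := by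
        refine lintegral_congr_ae ?_
        filter_upwards [hGnn] with t h
        rw [Real.norm_eq_abs, abs_of_nonneg h]
      rw [heqn, ← hacteq]
      exact lt_top_iff_ne_top.mpr hne
    have hintG : (∫ t in Set.Icc (0:ℝ) 1, ((1/4) * ∑ i, ∑ j,
        (if E i j then (m t i j)^2 / thetaA (ρ t) i j else 0)))
        = (action E ρ m).toReal := by
      have h0 := MeasureTheory.ofReal_integral_eq_lintegral_ofReal hGint hGnn
      rw [hacteq, ← h0, ENNReal.toReal_ofReal (integral_nonneg_of_ae hGnn)]
    have hGapint : Integrable (fun t => ((1/4) * ∑ i, ∑ j,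
        (if E i j then (m t i j)^2 / thetaA (ρ t) i j else 0))
        - ∑ i, (Sd t i * ρ t i - S t i * (∑ j,
            (if E i j then m t i j + (Sg j - Sg i) * thetaA (ρ t) i j * wd t else 0))))
        (volume.restrict (Set.Icc (0:ℝ) 1)) := hGint.sub hPint
    have hGapnn : ∀ᵐ t ∂(volume.restrict (Set.Icc (0:ℝ) 1)),
        0 ≤ ((1/4) * ∑ i, ∑ j,
          (if E i j then (m t i j)^2 / thetaA (ρ t) i j else 0))
        - ∑ i, (Sd t i * ρ t i - S t i * (∑ j,
            (if E i j then m t i j + (Sg j - Sg i) * thetaA (ρ t) i j * wd t else 0))) := by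
      filter_upwards [hmem, hgood, hhjb] with t ht hg hj
      rw [hgapid t ht hg]
      have hs : 0 ≤ ∑ i, ∑ j, (if E i j then
          (m t i j + thetaA (ρ t) i j * (S t i - S t j))^2 / thetaA (ρ t) i j else 0) :=
        Finset.sum_nonneg (fun i _ => Finset.sum_nonneg
          (fun j _ => hterm_nonneg t ht (fun i j => m t i j + thetaA (ρ t) i j * (S t i - S t j)) i j))
      linarith
    have hGapzero : (fun t => ((1/4) * ∑ i, ∑ j,
        (if E i j then (m t i j)^2 / thetaA (ρ t) i j else 0))
        - ∑ i, (Sd t i * ρ t i - S t i * (∑ j,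
            (if E i j then m t i j + (Sg j - Sg i) * thetaA (ρ t) i j * wd t else 0))))
        =ᵐ[volume.restrict (Set.Icc (0:ℝ) 1)] 0 := by
      refine (MeasureTheory.integral_eq_zero_iff_of_nonneg_ae hGapnn hGapint).mp ?_
      rw [integral_sub hGint hPint, hintG, hB, heq]
      ring
    filter_upwards [hGapzero, hmem, hgood, hhjb] with t h0 ht hg hj
    simp only [Pi.zero_apply] at h0
    rw [hgapid t ht hg] at h0
    have hs : 0 ≤ ∑ i, ∑ j, (if E i j then
        (m t i j + thetaA (ρ t) i j * (S t i - S t j))^2 / thetaA (ρ t) i j else 0) :=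
      Finset.sum_nonneg (fun i _ => Finset.sum_nonneg
        (fun j _ => hterm_nonneg t ht (fun i j => m t i j + thetaA (ρ t) i j * (S t i - S t j)) i j))
    have hjb0 : hjbExpr E Sg wd S Sd (ρ t) t = 0 := by linarith
    have hslack0 : ∑ i, ∑ j, (if E i j then
        (m t i j + thetaA (ρ t) i j * (S t i - S t j))^2 / thetaA (ρ t) i j else 0) = 0 := by
      linarith
    refine ⟨?_, hjb0⟩
    intro i j hij
    have h2 := (Finset.sum_eq_zero_iff_of_nonneg (fun i _ => Finset.sum_nonneg
        (fun j _ => hterm_nonneg t ht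
          (fun i j => m t i j + thetaA (ρ t) i j * (S t i - S t j)) i j))).mp
      hslack0 i (Finset.mem_univ i)
    have h3 := (Finset.sum_eq_zero_iff_of_nonneg (fun j _ => hterm_nonneg t ht
        (fun i j => m t i j + thetaA (ρ t) i j * (S t i - S t j)) i j)).mp
      h2 j (Finset.mem_univ j)
    rw [if_pos hij] at h3
    rcases (hθ0 t ht i j).lt_or_eq with hpos | hzero
    · have hnum : m t i j + thetaA (ρ t) i j * (S t i - S t j) = 0 := by
        rcases div_eq_zero_iff.mp h3 with h4 | h4
        · exact (pow_eq_zero_iff two_ne_zero).mp h4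
        · exact absurd h4 (ne_of_gt hpos)
      linear_combination hnum
    · rw [hg i j hij hzero.symm, ← hzero]
      ring
  · intro hcond
    have hgood : ∀ᵐ t ∂(volume.restrict (Set.Icc (0:ℝ) 1)),
        ∀ i j, E i j → thetaA (ρ t) i j = 0 → m t i j = 0 := by
      filter_upwards [hcond] with t htc i j hij hz
      rw [htc.1 i j hij, hz, zero_mul]
    have hG2cont : ContinuousOn (fun t => (1/4) * ∑ i, ∑ j,
        (if E i j then (S t i - S t j)^2 * thetaA (ρ t) i j else 0)) (Set.Icc (0:ℝ) 1) := by
      refine continuousOn_const.mul ?_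
      refine continuousOn_finset_sum _ (fun i _ => ?_)
      refine continuousOn_finset_sum _ (fun j _ => ?_)
      by_cases h : E i j
      · simp only [if_pos h]
        exact (((hScont i).sub (hScont j)).pow 2).mul (hθcont i j)
      · simp only [if_neg h]; exact continuousOn_const
    obtain ⟨K, hK⟩ := isCompact_Icc.exists_bound_of_continuousOn hG2cont
    have hG2int : Integrable (fun t => (1/4) * ∑ i, ∑ j,
        (if E i j then (S t i - S t j)^2 * thetaA (ρ t) i j else 0))
        (volume.restrict (Set.Icc (0:ℝ) 1)) := by
      refine ⟨hG2cont.aestronglyMeasurable measurableSet_Icc, ?_⟩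
      exact HasFiniteIntegral.of_bounded (C := K)
        (by filter_upwards [hmem] with t ht; exact hK t ht)
    have hG2nn : ∀ᵐ t ∂(volume.restrict (Set.Icc (0:ℝ) 1)),
        0 ≤ (1/4) * ∑ i, ∑ j, (if E i j then (S t i - S t j)^2 * thetaA (ρ t) i j else 0) := by
      filter_upwards [hmem] with t ht
      have h1 : 0 ≤ ∑ i, ∑ j, (if E i j then (S t i - S t j)^2 * thetaA (ρ t) i j else 0) := by
        refine Finset.sum_nonneg (fun i _ => Finset.sum_nonneg (fun j _ => ?_))
        by_cases h : E i j
        · rw [if_pos h]; exact mul_nonneg (sq_nonneg _) (hθ0 t ht i j)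
        · rw [if_neg h]
      linarith
    have hGG2 : ∀ t ∈ Set.Icc (0:ℝ) 1,
        (∀ i j, E i j → m t i j = thetaA (ρ t) i j * (S t j - S t i)) →
        (∑ i, ∑ j, (if E i j then (m t i j)^2 / thetaA (ρ t) i j else 0))
          = ∑ i, ∑ j, (if E i j then (S t i - S t j)^2 * thetaA (ρ t) i j else 0) := by
      intro t ht hmc
      refine Finset.sum_congr rfl (fun i _ => Finset.sum_congr rfl (fun j _ => ?_))
      by_cases h : E i j
      · rw [if_pos h, if_pos h, hmc i j h]
        rcases (hθ0 t ht i j).lt_or_eq with hpos | hzero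
        · field_simp
          ring
        · rw [← hzero]; simp
      · rw [if_neg h, if_neg h]
    have hacteq2 : action E ρ m = ∫⁻ t in Set.Icc (0:ℝ) 1,
        ENNReal.ofReal ((1/4) * ∑ i, ∑ j,
          (if E i j then (S t i - S t j)^2 * thetaA (ρ t) i j else 0)) := by
      unfold action
      refine lintegral_congr_ae ?_
      filter_upwards [hmem, hgood, hcond] with t ht hg htc
      rw [hLeq t ht hg, hGG2 t ht htc.1]
    have h0 := MeasureTheory.ofReal_integral_eq_lintegral_ofReal hG2int hG2nn
    have hne : action E ρ m ≠ ⊤ := by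
      rw [hacteq2, ← h0]; exact ENNReal.ofReal_ne_top
    refine ⟨hne, ?_⟩
    have htoReal : (action E ρ m).toReal = ∫ t in Set.Icc (0:ℝ) 1,
        ((1/4) * ∑ i, ∑ j, (if E i j then (S t i - S t j)^2 * thetaA (ρ t) i j else 0)) := by
      rw [hacteq2, ← h0, ENNReal.toReal_ofReal (integral_nonneg_of_ae hG2nn)]
    rw [htoReal, ← hB]
    refine integral_congr_ae ?_
    filter_upwards [hmem, hcond, hgood] with t ht htc hg
    have hid := hgapid t ht hg
    have hslack0 : ∑ i, ∑ j, (if E i j then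
        (m t i j + thetaA (ρ t) i j * (S t i - S t j))^2 / thetaA (ρ t) i j else 0) = 0 := by
      refine Finset.sum_eq_zero (fun i _ => Finset.sum_eq_zero (fun j _ => ?_))
      by_cases h : E i j
      · rw [if_pos h, htc.1 i j h]
        have hz : thetaA (ρ t) i j * (S t j - S t i)
            + thetaA (ρ t) i j * (S t i - S t j) = 0 := by ring
        rw [hz]
        simp
      · rw [if_neg h]
    rw [htc.2, hslack0] at hid
    rw [← hGG2 t ht htc.1]
    linarith [hid]
  

end
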